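/- Let X be a finite group with an outer action on the hyperfinite II₁ factor R, implemented by unitaries {u_x} in the crossed product R ⋊ X, and let ω be a free ultrafilter on ℕ. Then R^ω ∩ (R ⋊ X)' = (R_ω)^X, the fixed points of the pointwise ultrapower action of X on the central sequence algebra R_ω; moreover (R^X)^ω ∩ R' is contained in (R_ω)^X. -/

import Mathlib

open scoped ENNReal

noncomputable section

section Base

variable {M : Type*} [NormedRing M] [StarRing M] [CStarRing M] [NormedAlgebra ℂ M] [StarModule ℂ M] [PartialOrder M] [StarOrderedRing M] [CompleteSpace M]

/-- A faithful normalized tracial state (the trace of a finite von Neumann algebra). -/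
structure IsTracialState (tr : M →ₗ[ℂ] ℂ) : Prop where
  map_one : tr 1 = 1
  tr_comm : ∀ x y : M, tr (x * y) = tr (y * x)
  pos : ∀ x : M, 0 ≤ x → ∃ r : ℝ, 0 ≤ r ∧ tr x = (r : ℂ)
  faithful : ∀ x : M, 0 ≤ x → tr x = 0 → x = 0
  norm_le : ∀ x : M, ‖tr x‖ ≤ ‖x‖

/-- The trace 2-norm `‖x‖₂ = √(tr (x* x))`. -/
def nrm2 (tr : M →ₗ[ℂ] ℂ) (x : M) : ℝ := Real.sqrt ((tr (star x * x)).re)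

/-- The commutant of a subset. -/
def commutantSet (S : Set M) : Set M := {x | ∀ s ∈ S, s * x = x * s}

/-- The relative commutant `A' ∩ B`. -/
def relCommSet (A B : Set M) : Set M := {x | x ∈ B ∧ ∀ a ∈ A, a * x = x * a}

/-- The center of a subset: elements of `S` commuting with all of `S`. -/
def centerSet (S : Set M) : Set M := {x | x ∈ S ∧ ∀ y ∈ S, x * y = y * x}

/-- `S` is a (sub)factor: its relative center consists of scalars. -/
def IsSubFactorSet (S : Set M) : Prop :=
  ∀ z ∈ S, (∀ y ∈ S, z * y = y * z) → ∃ c : ℂ, z = algebraMap ℂ M c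

/-- A trace-preserving conditional expectation onto the subalgebra (set) `A`. -/
structure IsCondExp (tr : M →ₗ[ℂ] ℂ) (A : Set M) (E : M →ₗ[ℂ] M) : Prop where
  mem : ∀ x : M, E x ∈ A
  fix : ∀ x ∈ A, E x = x
  bimod : ∀ a ∈ A, ∀ b ∈ A, ∀ x : M, E (a * x * b) = a * E x * b
  pos : ∀ x : M, 0 ≤ x → 0 ≤ E x
  map_star : ∀ x : M, E (star x) = star (E x)
  trace_eq : ∀ x : M, tr (E x) = tr x

/-- The Pimsner–Popa index `[B : A]` of an inclusion `A ⊆ B`, computed from the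
trace-preserving conditional expectation `E` onto `A`: the reciprocal of the best
constant `λ` such that `λ • x ≤ E x` for every positive `x ∈ B`. -/
def ppIndex (E : M →ₗ[ℂ] M) (B : Set M) : ℝ≥0∞ :=
  (⨆ (l : NNReal) (_ : ∀ x ∈ B, 0 ≤ x → (((l : ℝ) : ℂ)) • x ≤ E x), (l : ℝ≥0∞))⁻¹

/-- A II₁ factor: an infinite-dimensional factor with a faithful tracial state. -/
structure IsII1Factor (tr : M →ₗ[ℂ] ℂ) : Prop where
  tracial : IsTracialState tr
  factor : ∀ z : M, (∀ y : M, z * y = y * z) → ∃ c : ℂ, z = algebraMap ℂ M c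
  infiniteDimensional : ¬ FiniteDimensional ℂ M

/-- Hyperfiniteness of `S`: an increasing chain of finite-dimensional *-subalgebras
contained in `S` whose union is `‖·‖₂`-dense in `S`. -/
def IsHyperfiniteSet (tr : M →ₗ[ℂ] ℂ) (S : Set M) : Prop :=
  ∃ B : ℕ → StarSubalgebra ℂ M, Monotone B ∧ (∀ n, FiniteDimensional ℂ ↥(B n)) ∧
    (∀ n, (B n : Set M) ⊆ S) ∧
    ∀ x ∈ S, ∀ ε : ℝ, 0 < ε → ∃ n, ∃ y ∈ B n, nrm2 tr (x - y) < ε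

/-- A bounded sequence. -/
def BddSeq (x : ℕ → M) : Prop := ∃ C : ℝ, ∀ n, ‖x n‖ ≤ C

/-- A free ultrafilter on ℕ: one containing all cofinite sets. -/
def IsFreeUltrafilter (ω : Ultrafilter ℕ) : Prop := (ω : Filter ℕ) ≤ Filter.cofinite

variable {N : Type*} [NormedRing N] [StarRing N] [CStarRing N] [NormedAlgebra ℂ N] [StarModule ℂ N] [PartialOrder N] [StarOrderedRing N] [CompleteSpace N]

/-- `π` presents `N` as the tracial ultrapower `M^ω`: the quotient of the algebra of
bounded sequences in `M` by the ideal of sequences with `‖·‖₂ → 0` along `ω`. -/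
structure IsUltrapower (ω : Ultrafilter ℕ) (trM : M →ₗ[ℂ] ℂ) (trN : N →ₗ[ℂ] ℂ)
    (π : (ℕ → M) → N) : Prop where
  map_add : ∀ x y : ℕ → M, BddSeq x → BddSeq y → π (fun n => x n + y n) = π x + π y
  map_mul : ∀ x y : ℕ → M, BddSeq x → BddSeq y → π (fun n => x n * y n) = π x * π y
  map_smul : ∀ (c : ℂ) (x : ℕ → M), BddSeq x → π (fun n => c • x n) = c • π x
  map_star : ∀ x : ℕ → M, BddSeq x → π (fun n => star (x n)) = star (π x)
  map_one : π (fun _ => 1) = 1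
  norm_le : ∀ (x : ℕ → M) (C : ℝ), (∀ n, ‖x n‖ ≤ C) → ‖π x‖ ≤ C
  trace_tendsto : ∀ x : ℕ → M, BddSeq x →
    Filter.Tendsto (fun n => trM (x n)) (ω : Filter ℕ) (nhds (trN (π x)))
  eq_iff : ∀ x y : ℕ → M, BddSeq x → BddSeq y →
    (π x = π y ↔ Filter.Tendsto (fun n => nrm2 trM (x n - y n)) (ω : Filter ℕ) (nhds 0))
  surj : ∀ z : N, ∃ x : ℕ → M, BddSeq x ∧ π x = z

/-- The canonical embedding of `M` into the ultrapower, via constant sequences. -/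
def uConst (π : (ℕ → M) → N) (a : M) : N := π (fun _ => a)

/-- The image `S^ω` in the ultrapower of the bounded sequences with entries in `S`. -/
def uSet (π : (ℕ → M) → N) (S : Set M) : Set N :=
  {z | ∃ x : ℕ → M, BddSeq x ∧ (∀ n, x n ∈ S) ∧ π x = z}

end Base



section Aux

variable {M : Type*} [NormedRing M] [StarRing M] [CStarRing M] [NormedAlgebra ℂ M] [StarModule ℂ M] [PartialOrder M] [StarOrderedRing M] [CompleteSpace M]

local instance auxCStar : CStarAlgebra M :=
  { ‹NormedRing M›, ‹StarRing M›, ‹CStarRing M›, ‹NormedAlgebra ℂ M›,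
    ‹StarModule ℂ M›, ‹CompleteSpace M› with }

variable {tr : M →ₗ[ℂ] ℂ} (htr : IsTracialState tr)
include htr

lemma aux_tr_selfAdjoint (a : M) (ha : IsSelfAdjoint a) : (tr a).im = 0 := by
  have hle : -(algebraMap ℝ M ‖a‖) ≤ a := IsSelfAdjoint.neg_algebraMap_norm_le_self ha
  have h0 : (0 : M) ≤ a + algebraMap ℝ M ‖a‖ := by
    have := add_le_add_right hle (algebraMap ℝ M ‖a‖)
    rw [add_comm]; simpa using this
  obtain ⟨r, hr0, hr⟩ := htr.pos _ h0
  have halg : tr (algebraMap ℝ M ‖a‖) = ((‖a‖ : ℝ) : ℂ) := by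
    rw [Algebra.algebraMap_eq_smul_one, ← algebraMap_smul ℂ (‖a‖) (1 : M), map_smul]
    simp [htr.map_one, Algebra.smul_def]
  have : tr a + ((‖a‖ : ℝ) : ℂ) = (r : ℂ) := by
    rw [← halg, ← map_add]; exact hr
  have him := congrArg Complex.im this
  simpa using him

lemma aux_tr_star (z : M) : tr (star z) = (starRingEnd ℂ) (tr z) := by
  have h1 : (tr (z + star z)).im = 0 :=
    aux_tr_selfAdjoint htr _ (by simp [IsSelfAdjoint, star_add, add_comm])
  have h2 : (tr (Complex.I • z - Complex.I • star z)).im = 0 := by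
    refine aux_tr_selfAdjoint htr _ ?_
    simp only [IsSelfAdjoint, star_sub, star_smul, star_star, RCLike.star_def, Complex.conj_I,
      neg_smul]
    abel
  rw [map_add] at h1
  rw [map_sub, map_smul, map_smul] at h2
  simp only [Complex.add_im, Complex.sub_im, Complex.smul_im, Complex.mul_im, Complex.I_re,
    Complex.I_im, smul_eq_mul] at h1 h2
  apply Complex.ext <;> simp only [Complex.conj_re, Complex.conj_im] <;> nlinarith [h1, h2]

def auxCore (htr : IsTracialState tr) : PreInnerProductSpace.Core ℂ M where
  inner x y := tr (star x * y)
  conj_inner_symm x y := by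
    change (starRingEnd ℂ) (tr (star y * x)) = tr (star x * y)
    rw [← aux_tr_star htr]
    simp [star_mul]
  re_inner_nonneg x := by
    obtain ⟨r, hr0, hr⟩ := htr.pos (star x * x) (star_mul_self_nonneg x)
    change 0 ≤ (tr (star x * x)).re
    rw [hr]; simpa using hr0
  add_left x y z := by
    change tr (star (x + y) * z) = tr (star x * z) + tr (star y * z)
    rw [star_add, add_mul, map_add]
  smul_left x y r := by
    change tr (star (r • x) * y) = (starRingEnd ℂ) r * tr (star x * y)
    rw [star_smul, smul_mul_assoc, map_smul]
    simp [RCLike.star_def, smul_eq_mul]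

lemma aux_cs (x y : M) : ‖tr (star x * y)‖ ≤ nrm2 tr x * nrm2 tr y := by
  have h := @InnerProductSpace.Core.inner_mul_inner_self_le ℂ M _ _ _ (auxCore htr) x y
  have hsymm : ‖(auxCore htr).inner y x‖ = ‖(auxCore htr).inner x y‖ := by
    rw [← (auxCore htr).conj_inner_symm y x]
    simp
  rw [hsymm] at h
  have hxx : 0 ≤ (tr (star x * x)).re := (auxCore htr).re_inner_nonneg x
  have hyy : 0 ≤ (tr (star y * y)).re := (auxCore htr).re_inner_nonneg y
  have h' : ‖tr (star x * y)‖ ^ 2 ≤ (tr (star x * x)).re * (tr (star y * y)).re := by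
    rw [pow_two]; exact h
  rw [nrm2, nrm2, ← Real.sqrt_mul hxx]
  exact (Real.le_sqrt (norm_nonneg _) (mul_nonneg hxx hyy)).2 h'

omit htr in
lemma aux_nrm2_nonneg (x : M) : 0 ≤ nrm2 tr x := Real.sqrt_nonneg _

omit htr in
lemma aux_nrm2_neg (x : M) : nrm2 tr (-x) = nrm2 tr x := by
  simp [nrm2]

lemma aux_re_nonneg (x : M) : 0 ≤ (tr (star x * x)).re := (auxCore htr).re_inner_nonneg x

lemma aux_nrm2_triangle (x y : M) : nrm2 tr (x + y) ≤ nrm2 tr x + nrm2 tr y := by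
  have hxy := aux_cs htr x y
  have hyx := aux_cs htr y x
  have hrexy : (tr (star x * y)).re ≤ nrm2 tr x * nrm2 tr y :=
    (Complex.re_le_norm _).trans hxy
  have hreyx : (tr (star y * x)).re ≤ nrm2 tr x * nrm2 tr y := by
    refine (Complex.re_le_norm _).trans ?_
    rw [mul_comm]; exact hyx
  have hexp : star (x + y) * (x + y)
      = star x * x + (star x * y + (star y * x + star y * y)) := by
    rw [star_add]; noncomm_ring
  have hre : (tr (star (x + y) * (x + y))).re
      ≤ (nrm2 tr x + nrm2 tr y) ^ 2 := by
    rw [hexp, map_add, map_add, map_add]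
    have hx2 : (tr (star x * x)).re = nrm2 tr x ^ 2 := by
      rw [nrm2, Real.sq_sqrt (aux_re_nonneg htr x)]
    have hy2 : (tr (star y * y)).re = nrm2 tr y ^ 2 := by
      rw [nrm2, Real.sq_sqrt (aux_re_nonneg htr y)]
    simp only [Complex.add_re]
    nlinarith [hx2, hy2]
  rw [nrm2]
  calc Real.sqrt (tr (star (x + y) * (x + y))).re
      ≤ Real.sqrt ((nrm2 tr x + nrm2 tr y) ^ 2) := Real.sqrt_le_sqrt hre
    _ = nrm2 tr x + nrm2 tr y := by
        rw [Real.sqrt_sq (add_nonneg (aux_nrm2_nonneg x) (aux_nrm2_nonneg y))]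

lemma aux_tr_mono {a b : M} (hab : a ≤ b) : (tr a).re ≤ (tr b).re := by
  obtain ⟨r, hr0, hr⟩ := htr.pos (b - a) (sub_nonneg.2 hab)
  rw [map_sub] at hr
  have := congrArg Complex.re hr
  simp only [Complex.sub_re, Complex.ofReal_re] at this
  linarith

lemma aux_nrm2_mul_le_left (a b : M) : nrm2 tr (a * b) ≤ ‖a‖ * nrm2 tr b := by
  have hle : star (a * b) * (a * b) ≤ (‖a‖ ^ 2) • (star b * b) := by
    have h1 : star a * a ≤ algebraMap ℝ M (‖a‖ ^ 2) :=
      CStarAlgebra.star_mul_le_algebraMap_norm_sq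
    have h2 := star_left_conjugate_le_conjugate h1 b
    have hrw : star b * algebraMap ℝ M (‖a‖ ^ 2) * b = (‖a‖ ^ 2) • (star b * b) := by
      rw [Algebra.algebraMap_eq_smul_one, mul_smul_one, smul_mul_assoc]
    calc star (a * b) * (a * b) = star b * (star a * a) * b := by
          rw [star_mul]; noncomm_ring
      _ ≤ star b * algebraMap ℝ M (‖a‖ ^ 2) * b := h2
      _ = (‖a‖ ^ 2) • (star b * b) := hrw
  have hre := aux_tr_mono htr hle
  have hsm : tr ((‖a‖ ^ 2) • (star b * b)) = ((‖a‖ ^ 2 : ℝ) : ℂ) * tr (star b * b) := by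
    rw [← algebraMap_smul ℂ (‖a‖ ^ 2) (star b * b), map_smul]
    simp [Algebra.smul_def]
  rw [hsm] at hre
  have hre2 : (tr (star (a * b) * (a * b))).re ≤ ‖a‖ ^ 2 * (tr (star b * b)).re := by
    refine hre.trans_eq ?_
    simp [Complex.mul_re, ← Complex.ofReal_pow]
  rw [nrm2, nrm2]
  calc Real.sqrt (tr (star (a * b) * (a * b))).re
      ≤ Real.sqrt (‖a‖ ^ 2 * (tr (star b * b)).re) := Real.sqrt_le_sqrt hre2
    _ = ‖a‖ * Real.sqrt (tr (star b * b)).re := by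
        rw [Real.sqrt_mul (sq_nonneg _), Real.sqrt_sq (norm_nonneg _)]

lemma aux_nrm2_star (x : M) : nrm2 tr (star x) = nrm2 tr x := by
  rw [nrm2, nrm2, star_star, htr.tr_comm]

lemma aux_nrm2_mul_le_right (a b : M) : nrm2 tr (a * b) ≤ nrm2 tr a * ‖b‖ := by
  have := aux_nrm2_mul_le_left htr (star b) (star a)
  rw [← star_mul, aux_nrm2_star htr, aux_nrm2_star htr, norm_star] at this
  linarith

end Aux

/-- Let `X` be a finite group with an outer action on the
hyperfinite II₁ factor `R`, implemented by unitaries `u x` in the crossed product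
`P = R ⋊ X`, and `ω` a free ultrafilter on ℕ.  Then
`R^ω ∩ (R ⋊ X)' = (R_ω)^X`, the fixed points of the pointwise ultrapower action of
`X` on the central sequence algebra `R_ω`; moreover `(R^X)^ω ∩ R' ⊆ (R_ω)^X`. -/
theorem crossed_product_central_sequences
    {P : Type*} [NormedRing P] [StarRing P] [CStarRing P] [NormedAlgebra ℂ P] [StarModule ℂ P] [PartialOrder P] [StarOrderedRing P] [CompleteSpace P]
    {N : Type*} [NormedRing N] [StarRing N] [CStarRing N] [NormedAlgebra ℂ N] [StarModule ℂ N] [PartialOrder N] [StarOrderedRing N] [CompleteSpace N]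
    (trP : P →ₗ[ℂ] ℂ) (trN : N →ₗ[ℂ] ℂ)
    -- `P` is the crossed product `R ⋊ X`, a II₁ factor:
    (hP : IsII1Factor trP)
    {X : Type*} [Group X] [Fintype X]
    (Rsub : StarSubalgebra ℂ P)
    (hRfac : IsSubFactorSet (Rsub : Set P)) (hRinf : ¬ FiniteDimensional ℂ ↥Rsub)
    (hRhyp : IsHyperfiniteSet trP (Rsub : Set P))
    -- the unitaries `u x` implementing the action of `X` on `R`:
    (u : X → P)
    (hu1 : u 1 = 1)
    (humul : ∀ x y : X, u (x * y) = u x * u y)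
    (huni : ∀ x : X, u x ∈ unitary P)
    (hcov : ∀ x : X, ∀ r ∈ Rsub, u x * r * star (u x) ∈ Rsub)
    -- the action is outer:
    (houter : ∀ x : X, x ≠ 1 → ¬ ∃ v, v ∈ Rsub ∧ v ∈ unitary P ∧
      ∀ r ∈ Rsub, u x * r * star (u x) = v * r * star v)
    -- `P` is generated by `R` and the `u x`:
    (hgen : ∀ p : P, ∀ ε : ℝ, 0 < ε →
      ∃ y ∈ Submodule.span ℂ {z : P | ∃ r ∈ Rsub, ∃ x : X, z = r * u x},
        nrm2 trP (p - y) < ε)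
    -- crossed-product trace:
    (htr0 : ∀ x : X, x ≠ 1 → ∀ r ∈ Rsub, trP (r * u x) = 0)
    (ω : Ultrafilter ℕ) (hω : IsFreeUltrafilter ω)
    (π : (ℕ → P) → N) (hπ : IsUltrapower ω trP trN π) :
    -- `R^ω ∩ (R ⋊ X)' = (R_ω)^X` (fixedness under `(α_x)_ω = Ad (u x)_ω` expressed
    -- as commutation with the constant sequence on the unitary `u x`):
    uSet π (Rsub : Set P) ∩ commutantSet (Set.range (uConst π)) =
      (uSet π (Rsub : Set P) ∩ commutantSet (uConst π '' (Rsub : Set P)) ∩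
        {y : N | ∀ x : X, uConst π (u x) * y = y * uConst π (u x)}) ∧
    -- `(R^X)^ω ∩ R' ⊆ (R_ω)^X`:
    uSet π {r : P | r ∈ Rsub ∧ ∀ x : X, u x * r = r * u x} ∩
        commutantSet (uConst π '' (Rsub : Set P)) ⊆
      (uSet π (Rsub : Set P) ∩ commutantSet (uConst π '' (Rsub : Set P)) ∩
        {y : N | ∀ x : X, uConst π (u x) * y = y * uConst π (u x)}) := by
  have htr : IsTracialState trP := hP.tracial
  have hbc : ∀ a : P, BddSeq (fun _ : ℕ => a) := fun a => ⟨‖a‖, fun _ => le_rfl⟩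
  have hconst_mul : ∀ a b : P, uConst π (a * b) = uConst π a * uConst π b := by
    intro a b
    have := hπ.map_mul (fun _ => a) (fun _ => b) (hbc a) (hbc b)
    simpa [uConst] using this
  have key : ∀ y ∈ uSet π (Rsub : Set P),
      (∀ r ∈ Rsub, uConst π r * y = y * uConst π r) →
      (∀ x : X, uConst π (u x) * y = y * uConst π (u x)) →
      ∀ p : P, uConst π p * y = y * uConst π p := by
    rintro y ⟨r, ⟨C, hC⟩, hrR, rfl⟩ hcomm hux
    have hC0 : (0:ℝ) ≤ C := le_trans (norm_nonneg (r 0)) (hC 0)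
    have hrB : BddSeq r := ⟨C, hC⟩
    have hspan : ∀ a ∈ Submodule.span ℂ {z : P | ∃ s ∈ Rsub, ∃ x : X, z = s * u x},
        uConst π a * π r = π r * uConst π a := by
      intro a ha
      induction ha using Submodule.span_induction with
      | mem z hz =>
          obtain ⟨s, hs, x, rfl⟩ := hz
          rw [hconst_mul, mul_assoc, hux x, ← mul_assoc, hcomm s hs, mul_assoc]
      | zero =>
          have h0 : uConst π (0 : P) = 0 := by
            have := hπ.map_smul 0 (fun _ => (0 : P)) (hbc 0)
            simpa [uConst] using this
          rw [h0, zero_mul, mul_zero]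
      | add a b ha hb iha ihb =>
          have hadd : uConst π (a + b) = uConst π a + uConst π b := by
            have := hπ.map_add (fun _ => a) (fun _ => b) (hbc a) (hbc b)
            simpa [uConst] using this
          rw [hadd, add_mul, mul_add, iha, ihb]
      | smul c a ha iha =>
          have hsm : uConst π (c • a) = c • uConst π a := by
            have := hπ.map_smul c (fun _ => a) (hbc a)
            simpa [uConst] using this
          rw [hsm, smul_mul_assoc, mul_smul_comm, iha]
    intro p
    have hb1 : BddSeq (fun n => p * r n) :=
      ⟨‖p‖ * C, fun n => le_trans (norm_mul_le _ _)
        (mul_le_mul_of_nonneg_left (hC n) (norm_nonneg p))⟩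
    have hb2 : BddSeq (fun n => r n * p) :=
      ⟨C * ‖p‖, fun n => le_trans (norm_mul_le _ _)
        (mul_le_mul_of_nonneg_right (hC n) (norm_nonneg p))⟩
    have heq : π (fun n => p * r n) = π (fun n => r n * p) := by
      rw [hπ.eq_iff _ _ hb1 hb2, Metric.tendsto_nhds]
      intro ε hε
      set δ := ε / (4 * (C + 1)) with hδ
      have hδpos : 0 < δ := by positivity
      obtain ⟨a, haspan, hanear⟩ := hgen p δ hδpos
      have hcomm_a := hspan a haspan
      have hba1 : BddSeq (fun n => a * r n) :=
        ⟨‖a‖ * C, fun n => le_trans (norm_mul_le _ _)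
          (mul_le_mul_of_nonneg_left (hC n) (norm_nonneg a))⟩
      have hba2 : BddSeq (fun n => r n * a) :=
        ⟨C * ‖a‖, fun n => le_trans (norm_mul_le _ _)
          (mul_le_mul_of_nonneg_right (hC n) (norm_nonneg a))⟩
      have h1 : π (fun n => a * r n) = π (fun n => r n * a) := by
        have e1 := hπ.map_mul (fun _ => a) r (hbc a) hrB
        have e2 := hπ.map_mul r (fun _ => a) hrB (hbc a)
        calc π (fun n => a * r n) = uConst π a * π r := e1
          _ = π r * uConst π a := hcomm_a
          _ = π (fun n => r n * a) := e2.symm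
      have htend := (hπ.eq_iff _ _ hba1 hba2).1 h1
      have hev : ∀ᶠ n in (ω : Filter ℕ), nrm2 trP (a * r n - r n * a) < ε / 2 := by
        have h3 := Metric.tendsto_nhds.1 htend (ε / 2) (by positivity)
        filter_upwards [h3] with n hn
        rw [Real.dist_eq, sub_zero, abs_of_nonneg (aux_nrm2_nonneg _)] at hn
        exact hn
      filter_upwards [hev] with n hn
      rw [Real.dist_eq, sub_zero, abs_of_nonneg (aux_nrm2_nonneg _)]
      have hdecomp : p * r n - r n * p
          = ((p - a) * r n) + ((a * r n - r n * a) + (r n * (a - p))) := by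
        noncomm_ring
      have hCn : ‖r n‖ ≤ C + 1 := (hC n).trans (by linarith)
      have t1 : nrm2 trP ((p - a) * r n) ≤ δ * (C + 1) := by
        refine le_trans (aux_nrm2_mul_le_right htr _ _) ?_
        exact mul_le_mul hanear.le hCn (norm_nonneg _) hδpos.le
      have t3 : nrm2 trP (r n * (a - p)) ≤ (C + 1) * δ := by
        refine le_trans (aux_nrm2_mul_le_left htr _ _) ?_
        have hap : nrm2 trP (a - p) ≤ δ := by
          rw [show a - p = -(p - a) from (neg_sub p a).symm, aux_nrm2_neg]
          exact hanear.le
        exact mul_le_mul hCn hap (aux_nrm2_nonneg _) (by linarith)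
      have hδ4 : δ * (C + 1) = ε / 4 := by
        rw [hδ]; field_simp
      have tri : nrm2 trP (p * r n - r n * p)
          ≤ nrm2 trP ((p - a) * r n)
            + (nrm2 trP (a * r n - r n * a) + nrm2 trP (r n * (a - p))) := by
        rw [hdecomp]
        refine le_trans (aux_nrm2_triangle htr _ _) ?_
        exact add_le_add_right (aux_nrm2_triangle htr _ _) _
      have : (C + 1) * δ = δ * (C + 1) := by ring
      linarith [tri, t1, t3, hn]
    have e1 := hπ.map_mul (fun _ => p) r (hbc p) hrB
    have e2 := hπ.map_mul r (fun _ => p) hrB (hbc p)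
    calc uConst π p * π r = π (fun n => p * r n) := e1.symm
      _ = π (fun n => r n * p) := heq
      _ = π r * uConst π p := e2
  constructor
  · apply Set.Subset.antisymm
    · rintro y ⟨hyR, hyC⟩
      refine ⟨⟨hyR, ?_⟩, fun x => hyC _ ⟨u x, rfl⟩⟩
      rintro s ⟨t, ht, rfl⟩
      exact hyC _ ⟨t, rfl⟩
    · rintro y ⟨⟨hyR, himg⟩, hux⟩
      refine ⟨hyR, ?_⟩
      rintro s ⟨p, rfl⟩
      exact key y hyR (fun t ht => himg _ ⟨t, ht, rfl⟩) hux p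
  · rintro y ⟨⟨x, hxB, hxS, rfl⟩, himg⟩
    refine ⟨⟨⟨x, hxB, fun n => (hxS n).1, rfl⟩, himg⟩, ?_⟩
    intro g
    have e1 := hπ.map_mul (fun _ => u g) x (hbc (u g)) hxB
    have e2 := hπ.map_mul x (fun _ => u g) hxB (hbc (u g))
    have hfun : (fun n => u g * x n) = (fun n => x n * u g) :=
      funext fun n => (hxS n).2 g
    calc uConst π (u g) * π x = π (fun n => u g * x n) := e1.symm
      _ = π (fun n => x n * u g) := by rw [hfun]
      _ = π x * uConst π (u g) := e2
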